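/- Let Λ be a finite group and let a system of interval-product equations ∏_{k=min B}^{max B} x_k = col(B) (over blocks B ⊆ {1,...,l} with colors in Λ) be solvable. Then the number of solutions in Λ^l equals |Λ|^{c−1}, where c is the number of connected components of the graph on {0,1,...,l} obtained by joining min B − 1 to max B for each block B. -/

import Mathlib

/-- Ordered product `x_{a} x_{a+1} ⋯ x_{b}` of a tuple `x ∈ Λ^l`, where position
`k ∈ {1,…,l}` corresponds to the coordinate `x ⟨k-1⟩`. -/
def intervalProd {Λ : Type*} [Monoid Λ] (l : ℕ) (x : Fin l → Λ) (a b : ℕ) : Λ :=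
  ((List.range' a (b + 1 - a)).map fun k => if h : k - 1 < l then x ⟨k - 1, h⟩ else 1).prod

/-- Prefix product `x_1 ⋯ x_n`. -/
private def pref {Λ : Type*} [Monoid Λ] (l : ℕ) (x : Fin l → Λ) (n : ℕ) : Λ :=
  ((List.range n).map fun k => if h : k < l then x ⟨k, h⟩ else 1).prod

private lemma pref_zero {Λ : Type*} [Monoid Λ] (l : ℕ) (x : Fin l → Λ) :
    pref l x 0 = 1 := by simp [pref]

private lemma pref_succ {Λ : Type*} [Monoid Λ] (l : ℕ) (x : Fin l → Λ) (n : ℕ) :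
    pref l x (n + 1) = pref l x n * (if h : n < l then x ⟨n, h⟩ else 1) := by
  simp [pref, List.range_succ]

private lemma intervalProd_eq_pref {Λ : Type*} [Group Λ] (l : ℕ) (x : Fin l → Λ)
    {a b : ℕ} (ha : 1 ≤ a) (hab : a ≤ b + 1) :
    intervalProd l x a b = (pref l x (a - 1))⁻¹ * pref l x b := by
  obtain ⟨a, rfl⟩ := Nat.exists_eq_add_of_le ha
  rw [Nat.add_comm 1 a]
  have h1 : intervalProd l x (a + 1) b
      = ((List.range' a (b - a)).map fun k => if h : k < l then x ⟨k, h⟩ else 1).prod := by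
    unfold intervalProd
    have : b + 1 - (a + 1) = b - a := by omega
    rw [this, List.range'_eq_map_range (s := a + 1), List.range'_eq_map_range (s := a),
      List.map_map, List.map_map]
    congr 1
    apply List.map_congr_left
    intro k _
    have : a + 1 + k - 1 = a + k := by omega
    simp [Function.comp, this]
  have h2 : pref l x b = pref l x a *
      ((List.range' a (b - a)).map fun k => if h : k < l then x ⟨k, h⟩ else 1).prod := by
    unfold pref
    rw [← List.prod_append, ← List.map_append]
    congr 2
    rw [List.range_eq_range', List.range_eq_range']
    have h3 := List.range'_append_1 (s := 0) (m := a) (n := b - a)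
    rw [Nat.zero_add] at h3
    rw [h3]
    congr 1
    omega
  have : a + 1 - 1 = a := by omega
  rw [this, h1, eq_inv_mul_iff_mul_eq, ← h2]

/-- Recovering a tuple with `y 0 = 1` from its difference sequence. -/
private lemma pref_dif {Λ : Type*} [Group Λ] (l : ℕ) (y : Fin (l + 1) → Λ)
    (hy0 : y 0 = 1) (n : ℕ) (hn : n < l + 1) :
    pref l (fun j => (y j.castSucc)⁻¹ * y j.succ) n = y ⟨n, hn⟩ := by
  induction n with
  | zero => rw [pref_zero]; exact hy0.symm
  | succ n ih =>
    have hnl : n < l := by omega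
    rw [pref_succ, ih (by omega), dif_pos hnl]
    have hc : (⟨n, hnl⟩ : Fin l).castSucc = ⟨n, by omega⟩ := rfl
    have hs : (⟨n, hnl⟩ : Fin l).succ = ⟨n + 1, hn⟩ := rfl
    rw [hc, hs]
    group

/-- If a system of interval-product equations `∏_{k=min B}^{max B} x_k = col B` over a
finite group `Λ` is solvable, then the number of solutions in `Λ^l` is
`|Λ| ^ (c - 1)`, where `c` is the number of connected components of the graph on
`{0,1,…,l}` joining `min B - 1` to `max B` for every block `B`. -/
theorem stmt6 {Λ : Type*} [Group Λ] [Fintype Λ] (l : ℕ)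
    {ι : Type*} (mn mx : ι → ℕ) (col : ι → Λ)
    (hmn : ∀ i, 1 ≤ mn i) (hmm : ∀ i, mn i ≤ mx i) (hmx : ∀ i, mx i ≤ l)
    (hsolv : ∃ x : Fin l → Λ, ∀ i, intervalProd l x (mn i) (mx i) = col i) :
    Nat.card {x : Fin l → Λ // ∀ i, intervalProd l x (mn i) (mx i) = col i} =
      Nat.card Λ ^
        (Nat.card (Quot fun a b : Fin (l + 1) =>
          ∃ i, (a.val = mn i - 1 ∧ b.val = mx i) ∨ (b.val = mn i - 1 ∧ a.val = mx i)) - 1) := by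
  classical
  set r : Fin (l + 1) → Fin (l + 1) → Prop := fun a b =>
    ∃ i, (a.val = mn i - 1 ∧ b.val = mx i) ∨ (b.val = mn i - 1 ∧ a.val = mx i) with hr
  obtain ⟨x₀, hx₀⟩ := hsolv
  have hmxlt : ∀ i, mx i < l + 1 := fun i => Nat.lt_succ_of_le (hmx i)
  have hmnlt : ∀ i, mn i - 1 < l + 1 := fun i => by have := hmm i; have := hmx i; omega
  -- characterization of solutions via prefix products
  have key : ∀ x : Fin l → Λ,
      (∀ i, intervalProd l x (mn i) (mx i) = col i) ↔
      (∀ i, pref l x (mx i) = pref l x (mn i - 1) * col i) := by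
    intro x
    have e : ∀ i, intervalProd l x (mn i) (mx i)
        = (pref l x (mn i - 1))⁻¹ * pref l x (mx i) :=
      fun i => intervalProd_eq_pref l x (hmn i) (by have := hmm i; omega)
    constructor <;> intro h i <;> have h := h i
    · rw [e i, inv_mul_eq_iff_eq_mul] at h; exact h
    · rw [e i, inv_mul_eq_iff_eq_mul]; exact h
  -- base solution prefix products
  set y₀ : Fin (l + 1) → Λ := fun k => pref l x₀ k.val with hy₀
  have hy₀0 : y₀ 0 = 1 := pref_zero l x₀
  have hy₀c : ∀ i, y₀ ⟨mx i, hmxlt i⟩ = y₀ ⟨mn i - 1, hmnlt i⟩ * col i :=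
    fun i => ((key x₀).1 hx₀) i
  -- Equivalence 1+2: solutions ≃ "z" functions constant along r with z 0 = 1
  let e1 : {x : Fin l → Λ // ∀ i, intervalProd l x (mn i) (mx i) = col i} ≃
      {z : Fin (l + 1) → Λ // z 0 = 1 ∧ ∀ a b, r a b → z a = z b} :=
    { toFun := fun x => ⟨fun k => pref l x.1 k.val * (y₀ k)⁻¹, by
        constructor
        · show pref l x.1 0 * (y₀ 0)⁻¹ = 1
          rw [pref_zero, hy₀0]; group
        · rintro a b ⟨i, hcase⟩
          have hx := ((key x.1).1 x.2) i
          have h₀ := hy₀c i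
          rcases hcase with ⟨ha, hb⟩ | ⟨hb, ha⟩
          · obtain rfl : a = ⟨mn i - 1, hmnlt i⟩ := by apply Fin.ext; exact ha
            obtain rfl : b = ⟨mx i, hmxlt i⟩ := by apply Fin.ext; exact hb
            show pref l x.1 (mn i - 1) * (y₀ ⟨mn i - 1, hmnlt i⟩)⁻¹
              = pref l x.1 (mx i) * (y₀ ⟨mx i, hmxlt i⟩)⁻¹
            rw [hx, h₀]; group
          · obtain rfl : b = ⟨mn i - 1, hmnlt i⟩ := by apply Fin.ext; exact hb
            obtain rfl : a = ⟨mx i, hmxlt i⟩ := by apply Fin.ext; exact ha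
            show pref l x.1 (mx i) * (y₀ ⟨mx i, hmxlt i⟩)⁻¹
              = pref l x.1 (mn i - 1) * (y₀ ⟨mn i - 1, hmnlt i⟩)⁻¹
            rw [hx, h₀]; group⟩,
      invFun := fun z => ⟨fun j => ((fun k => z.1 k * y₀ k) j.castSucc)⁻¹ *
          ((fun k => z.1 k * y₀ k) j.succ), by
        set y : Fin (l + 1) → Λ := fun k => z.1 k * y₀ k with hy
        have hyy0 : y 0 = 1 := by rw [hy]; simp [z.2.1, hy₀0]
        rw [key]
        intro i
        rw [show mx i = (⟨mx i, hmxlt i⟩ : Fin (l + 1)).val from rfl,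
          show mn i - 1 = (⟨mn i - 1, hmnlt i⟩ : Fin (l + 1)).val from rfl]
        rw [pref_dif l y hyy0 _ (hmxlt i), pref_dif l y hyy0 _ (hmnlt i)]
        have hz : z.1 ⟨mn i - 1, hmnlt i⟩ = z.1 ⟨mx i, hmxlt i⟩ :=
          z.2.2 _ _ ⟨i, Or.inl ⟨rfl, rfl⟩⟩
        show z.1 _ * y₀ _ = z.1 _ * y₀ _ * col i
        rw [hz, hy₀c i, mul_assoc]⟩,
      left_inv := by
        rintro ⟨x, hx⟩
        ext j
        show ((fun k : Fin (l+1) => (pref l x k.val * (y₀ k)⁻¹) * y₀ k) j.castSucc)⁻¹ *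
          ((fun k : Fin (l+1) => (pref l x k.val * (y₀ k)⁻¹) * y₀ k) j.succ) = x j
        simp only [inv_mul_cancel_right]
        show (pref l x j.val)⁻¹ * pref l x (j.val + 1) = x j
        rw [pref_succ, dif_pos j.isLt]
        group
      right_inv := by
        rintro ⟨z, hz0, hzc⟩
        ext k
        set y : Fin (l + 1) → Λ := fun k => z k * y₀ k with hy
        have hyy0 : y 0 = 1 := by rw [hy]; simp [hz0, hy₀0]
        show pref l (fun j => (y j.castSucc)⁻¹ * y j.succ) k.val * (y₀ k)⁻¹ = z k
        rw [pref_dif l y hyy0 _ k.isLt]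
        show z ⟨k.val, k.isLt⟩ * y₀ ⟨k.val, k.isLt⟩ * (y₀ k)⁻¹ = z k
        have : (⟨k.val, k.isLt⟩ : Fin (l + 1)) = k := rfl
        rw [this]
        group }
  -- Equivalence 3: ≃ functions on the quotient with value 1 at the class of 0
  let Q := Quot r
  let q0 : Q := Quot.mk r 0
  let e2 : {z : Fin (l + 1) → Λ // z 0 = 1 ∧ ∀ a b, r a b → z a = z b} ≃
      {f : Q → Λ // f q0 = 1} :=
    { toFun := fun z => ⟨Quot.lift z.1 z.2.2, z.2.1⟩,
      invFun := fun f => ⟨fun k => f.1 (Quot.mk r k), f.2, by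
        intro a b hab
        show f.1 (Quot.mk r a) = f.1 (Quot.mk r b)
        rw [Quot.sound hab]⟩,
      left_inv := fun z => rfl,
      right_inv := by
        rintro ⟨f, hf⟩
        ext q
        induction q using Quot.ind
        rfl }
  -- Equivalence 4: drop the fixed coordinate
  have : Finite Q := Quot.finite r
  let e3 : {f : Q → Λ // f q0 = 1} ≃ ({q : Q // q ≠ q0} → Λ) :=
    { toFun := fun f q => f.1 q.1,
      invFun := fun g => ⟨fun q => if h : q = q0 then 1 else g ⟨q, h⟩, by simp⟩,
      left_inv := by
        rintro ⟨f, hf⟩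
        ext q
        by_cases h : q = q0
        · subst h; simp [hf]
        · simp [h]
      right_inv := by
        intro g
        ext q
        simp [q.2] }
  have hfin : Fintype Q := Fintype.ofFinite Q
  have h1 : Nat.card ({q : Q // q ≠ q0} → Λ) = Nat.card Λ ^ (Nat.card Q - 1) := by
    rw [Nat.card_fun]
    congr 1
    rw [Nat.card_eq_fintype_card, Nat.card_eq_fintype_card, Fintype.card_subtype_compl,
      Fintype.card_subtype_eq]
  rw [Nat.card_congr ((e1.trans e2).trans e3), h1]
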